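/- Let ÷ be an AGM contraction operator with contraction-compatible faithful assignment Ψ ↦ ≤_Ψ. Then ÷ satisfies (IC2_⇒): if α ⊨ β then Ψ ÷ α ÷ β ⊨ γ implies Ψ ÷ β ⊨ γ, if and only if for all worlds ω₁, ω₂ ⊨ ¬α: ω₁ ≤_Ψ ω₂ implies ω₁ ≤_{Ψ÷α} ω₂. -/
import Mathlib


inductive Form (V : Type) : Type
  | var : V → Form V
  | falsum : Form V
  | imp : Form V → Form V → Form V

namespace Form

def eval {V : Type} (w : V → Bool) : Form V → Bool
  | var v => w v
  | falsum => false
  | imp a b => !(eval w a) || eval w b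

def neg {V : Type} (a : Form V) : Form V := imp a falsum

def top {V : Type} : Form V := neg falsum

def conj {V : Type} (a b : Form V) : Form V := neg (imp a (neg b))

end Form

/-- Worlds (propositional interpretations) over the signature `V`. -/
abbrev World (V : Type) := V → Bool

/-- Models of a single formula. -/
def FMod {V : Type} (a : Form V) : Set (World V) := {w | a.eval w = true}

/-- Models of a set of formulas. -/
def SMod {V : Type} (X : Set (Form V)) : Set (World V) := {w | ∀ a ∈ X, a.eval w = true}

/-- Deductive closure (consequence operator). -/
def Cn {V : Type} (X : Set (Form V)) : Set (Form V) := {b | ∀ w ∈ SMod X, b.eval w = true}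

/-- Minimal elements of a set of worlds w.r.t. a relation. -/
def minSet {V : Type} (S : Set (World V)) (r : World V → World V → Prop) : Set (World V) :=
  {w ∈ S | ∀ w' ∈ S, r w w'}

/-- Total preorder: total (hence reflexive) and transitive. -/
def TotalPre {V : Type} (r : World V → World V → Prop) : Prop :=
  (∀ x y, r x y ∨ r y x) ∧ (∀ x y z, r x y → r y z → r x z)

/-- A belief change operator over epistemic states `E`: each state has a
deductively closed belief set, and the operator maps a state and a formula to a state. -/
structure BCO (V E : Type) where
  Bel : E → Set (Form V)
  closed : ∀ Ψ, Cn (Bel Ψ) = Bel Ψ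
  op : E → Form V → E

/-- Models of (the belief set of) an epistemic state. -/
def stMod {V E : Type} (O : BCO V E) (Ψ : E) : Set (World V) := SMod (O.Bel Ψ)

/-- Faithful assignment: each `le Ψ` is a total preorder; models of `Ψ` are mutually
equivalent and strictly below non-models. -/
def Faithful {V E : Type} (O : BCO V E) (le : E → World V → World V → Prop) : Prop :=
  (∀ Ψ, TotalPre (le Ψ)) ∧
  (∀ Ψ w₁ w₂, w₁ ∈ stMod O Ψ → w₂ ∈ stMod O Ψ → le Ψ w₁ w₂) ∧
  (∀ Ψ w₁ w₂, w₁ ∈ stMod O Ψ → w₂ ∉ stMod O Ψ → (le Ψ w₁ w₂ ∧ ¬ le Ψ w₂ w₁))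

/-- Contraction-compatibility: `[[Ψ ÷ α]] = [[Ψ]] ∪ min([[¬α]], ≤_Ψ)`. -/
def ContrCompat {V E : Type} (O : BCO V E) (le : E → World V → World V → Prop) : Prop :=
  ∀ Ψ (α : Form V), stMod O (O.op Ψ α) = stMod O Ψ ∪ minSet (FMod α.neg) (le Ψ)

/-- Revision-compatibility: `[[Ψ * α]] = min([[α]], ≤_Ψ)`. -/
def RevCompat {V E : Type} (O : BCO V E) (le : E → World V → World V → Prop) : Prop :=
  ∀ Ψ (α : Form V), stMod O (O.op Ψ α) = minSet (FMod α) (le Ψ)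

/-- The AGM contraction postulates (C1)–(C7) for epistemic states. -/
def AGMContr {V E : Type} (O : BCO V E) : Prop :=
  (∀ Ψ α, O.Bel (O.op Ψ α) ⊆ O.Bel Ψ) ∧
  (∀ Ψ α, α ∉ O.Bel Ψ → O.Bel Ψ ⊆ O.Bel (O.op Ψ α)) ∧
  (∀ Ψ (α : Form V), ¬ (∀ w, w ∈ FMod α) → α ∉ O.Bel (O.op Ψ α)) ∧
  (∀ Ψ α, O.Bel Ψ ⊆ Cn (O.Bel (O.op Ψ α) ∪ {α})) ∧
  (∀ Ψ α β, FMod α = FMod β → O.Bel (O.op Ψ α) = O.Bel (O.op Ψ β)) ∧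
  (∀ Ψ (α β : Form V), O.Bel (O.op Ψ α) ∩ O.Bel (O.op Ψ β) ⊆ O.Bel (O.op Ψ (α.conj β))) ∧
  (∀ Ψ (α β : Form V), β ∉ O.Bel (O.op Ψ (α.conj β)) → O.Bel (O.op Ψ (α.conj β)) ⊆ O.Bel (O.op Ψ β))

/-- Unbiasedness: every consistent set of formulas has an epistemic state whose
belief set is its deductive closure. -/
def Unbiased {V E : Type} (O : BCO V E) : Prop :=
  ∀ L : Set (Form V), (SMod L).Nonempty → ∃ Ψ : E, O.Bel Ψ = Cn L

section AuxStmt11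

variable {V E : Type}

private def bigAnd (L : List (Form V)) : Form V := L.foldr Form.conj Form.top

private def bigOr (L : List (Form V)) : Form V :=
  L.foldr (fun a b => Form.imp (Form.neg a) b) Form.falsum

private lemma eval_conj (a b : Form V) (w : World V) :
    (a.conj b).eval w = (a.eval w && b.eval w) := by
  cases h : a.eval w <;> cases h' : b.eval w <;>
    simp [Form.conj, Form.neg, Form.eval, h, h']

private lemma eval_bigAnd (L : List (Form V)) (w : World V) :
    (bigAnd L).eval w = true ↔ ∀ a ∈ L, a.eval w = true := by
  induction L with
  | nil => simp [bigAnd, Form.top, Form.neg, Form.eval]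
  | cons a L ih => simp [bigAnd, eval_conj, ih, bigAnd] at *; tauto

private lemma eval_bigOr (L : List (Form V)) (w : World V) :
    (bigOr L).eval w = true ↔ ∃ a ∈ L, a.eval w = true := by
  induction L with
  | nil => simp [bigOr, Form.eval]
  | cons a L ih =>
    cases h : a.eval w <;> simp [bigOr, Form.neg, Form.eval, h, ih, bigOr] at * <;> tauto

private def lit (v : V) (b : Bool) : Form V :=
  if b then Form.var v else Form.neg (Form.var v)

private lemma eval_lit (v : V) (b : Bool) (w : World V) :
    (lit v b).eval w = true ↔ w v = b := by
  cases b <;> simp [lit, Form.neg, Form.eval]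

private noncomputable def worldForm [Fintype V] [DecidableEq V] (ω : World V) : Form V :=
  bigAnd (Finset.univ.toList.map (fun v => lit v (ω v)))

private lemma eval_worldForm [Fintype V] [DecidableEq V] (ω w : World V) :
    (worldForm ω).eval w = true ↔ w = ω := by
  simp [worldForm, eval_bigAnd, eval_lit, funext_iff]

private lemma exists_form [Fintype V] (S : Set (World V)) : ∃ γ : Form V, FMod γ = S := by
  classical
  refine ⟨bigOr ((Finset.univ.filter (· ∈ S)).toList.map worldForm), ?_⟩
  ext w
  simp only [FMod, Set.mem_setOf_eq, eval_bigOr, List.mem_map, Finset.mem_toList,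
    Finset.mem_filter, Finset.mem_univ, true_and]
  constructor
  · rintro ⟨a, ⟨ω, hω, rfl⟩, hev⟩
    rw [eval_worldForm] at hev; subst hev; exact hω
  · intro hw; exact ⟨worldForm w, ⟨w, hw, rfl⟩, (eval_worldForm w w).mpr rfl⟩

private lemma mem_FMod_neg {a : Form V} {w : World V} :
    w ∈ FMod a.neg ↔ w ∉ FMod a := by
  simp [FMod, Form.neg, Form.eval]

private lemma bel_iff (O : BCO V E) (Ψ : E) (γ : Form V) :
    γ ∈ O.Bel Ψ ↔ stMod O Ψ ⊆ FMod γ := by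
  constructor
  · intro h w hw; exact hw γ h
  · intro h
    have : γ ∈ Cn (O.Bel Ψ) := fun w hw => h hw
    rwa [O.closed] at this

end AuxStmt11

/-- (IC2_⇒) holds iff for all models `ω₁, ω₂` of `¬α`,
`ω₁ ≤_Ψ ω₂` implies `ω₁ ≤_{Ψ÷α} ω₂`. -/
theorem stmt_11 {V E : Type} [Fintype V] (O : BCO V E)
    (le : E → World V → World V → Prop)
    (hA : AGMContr O) (hF : Faithful O le) (hC : ContrCompat O le) :
    (∀ (Ψ : E) (α β γ : Form V), FMod α ⊆ FMod β →
        γ ∈ O.Bel (O.op (O.op Ψ α) β) → γ ∈ O.Bel (O.op Ψ β)) ↔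
    (∀ (Ψ : E) (α : Form V) (ω₁ ω₂ : World V),
        ω₁ ∈ FMod α.neg → ω₂ ∈ FMod α.neg → le Ψ ω₁ ω₂ → le (O.op Ψ α) ω₁ ω₂) := by
  constructor
  · -- (IC2⇒) implies the semantic condition
    intro hIC Ψ α ω₁ ω₂ h1 h2 h12
    -- model-level version of IC2
    have hIC' : ∀ (Ψ : E) (α β : Form V), FMod α ⊆ FMod β →
        stMod O (O.op Ψ β) ⊆ stMod O (O.op (O.op Ψ α) β) := by
      intro Ψ α β hab
      obtain ⟨γ, hγ⟩ := exists_form (V := V) (stMod O (O.op (O.op Ψ α) β))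
      have hmem : γ ∈ O.Bel (O.op (O.op Ψ α) β) :=
        (bel_iff O _ γ).mpr (by rw [hγ])
      have := (bel_iff O _ γ).mp (hIC Ψ α β γ hab hmem)
      rwa [hγ] at this
    -- choose β with models of ¬β exactly {ω₁, ω₂}
    obtain ⟨β, hβ⟩ := exists_form (V := V) ({ω₁, ω₂}ᶜ : Set (World V))
    have hnegβ : FMod β.neg = ({ω₁, ω₂} : Set (World V)) := by
      ext w
      rw [mem_FMod_neg, hβ]
      simp only [Set.mem_compl_iff, Set.mem_insert_iff, Set.mem_singleton_iff, not_not]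
    have hab : FMod α ⊆ FMod β := by
      intro w hw
      rw [hβ]
      intro hmem
      rcases hmem with rfl | rfl
      · exact (mem_FMod_neg.mp h1) hw
      · exact (mem_FMod_neg.mp h2) hw
    have hrefl : le Ψ ω₁ ω₁ := by
      rcases (hF.1 Ψ).1 ω₁ ω₁ with h | h <;> exact h
    have hmin : ω₁ ∈ minSet (FMod β.neg) (le Ψ) := by
      refine ⟨by rw [hnegβ]; exact Or.inl rfl, ?_⟩
      intro w' hw'
      rw [hnegβ] at hw'
      rcases hw' with rfl | rfl
      · exact hrefl
      · exact h12
    have hω₁ : ω₁ ∈ stMod O (O.op Ψ β) := by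
      rw [hC Ψ β]; exact Or.inr hmin
    have hω₁' := hIC' Ψ α β hab hω₁
    rw [hC (O.op Ψ α) β] at hω₁'
    rcases hω₁' with hmodel | hmin'
    · by_cases h2m : ω₂ ∈ stMod O (O.op Ψ α)
      · exact hF.2.1 _ ω₁ ω₂ hmodel h2m
      · exact (hF.2.2 _ ω₁ ω₂ hmodel h2m).1
    · exact hmin'.2 ω₂ (by rw [hnegβ]; exact Or.inr rfl)
  · -- semantic condition implies (IC2⇒)
    intro hsem Ψ α β γ hab hγ
    rw [bel_iff] at hγ ⊢
    intro w hw
    apply hγ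
    rw [hC Ψ β] at hw
    rw [hC (O.op Ψ α) β, hC Ψ α]
    have hnegsub : FMod β.neg ⊆ FMod α.neg := by
      intro x hx
      rw [mem_FMod_neg] at hx ⊢
      exact fun hxx => hx (hab hxx)
    rcases hw with hwΨ | hwmin
    · exact Or.inl (Or.inl hwΨ)
    · refine Or.inr ⟨hwmin.1, ?_⟩
      intro w' hw'
      exact hsem Ψ α w w' (hnegsub hwmin.1) (hnegsub hw') (hwmin.2 w' hw')
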